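/- arXiv:2009.07630 — 2 statements merged into one kernel-verified Lean document; each statement's English description precedes it below -/
import Mathlib

section
/- Let M be a loopless matroid with weights x : E → ℝ, B an x-optimal basis, and e ∉ B. Then x(e) ≥ μ_e(x), and μ_e(x) equals the maximum weight of an element in the fundamental path P(e,B) = {f ∈ B : (B - f) + e is a basis}. -/
open Matroid Set

variable {α : Type*}

/-- A circuit of a matroid: a minimal dependent set. -/
def Matroid.PaperIsCircuit (M : Matroid α) (C : Set α) : Prop :=
  M.Dep C ∧ ∀ ⦃D⦄, D ⊂ C → M.Indep D

/-- Looplessness in the sense of the paper: no element is a loop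
(every singleton of the ground set is independent) and no element is a
coloop (no element lies in all bases). -/
def Matroid.PaperLoopless (M : Matroid α) : Prop :=
  ∀ e ∈ M.E, M.Indep {e} ∧ ∃ B, M.IsBase B ∧ e ∉ B

/-- The weight `x(B)` of a set of ground elements. -/
noncomputable def setWeight (x : α → ℝ) (B : Set α) : ℝ := ∑ᶠ e ∈ B, x e

/-- The min-max weight `μ_e(x)`: the minimum over circuits `C` containing `e`
of the maximum weight of an element of `C - e`. -/
noncomputable def muWeight (M : Matroid α) (x : α → ℝ) (e : α) : ℝ :=
  sInf {w | ∃ C, M.PaperIsCircuit C ∧ e ∈ C ∧ w = sSup (x '' (C \ {e}))}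

/-- The bottleneck weight `b_e(x) = min {x(e), μ_e(x)}`. -/
noncomputable def bottleneck (M : Matroid α) (x : α → ℝ) (e : α) : ℝ :=
  min (x e) (muWeight M x e)

/-- The minimum weight of a basis of `M`. -/
noncomputable def mwb (M : Matroid α) (x : α → ℝ) : ℝ :=
  sInf {w | ∃ B, M.IsBase B ∧ w = setWeight x B}

/-- `B` is an `x`-optimal basis of `M`. -/
def IsOptimalBase (M : Matroid α) (x : α → ℝ) (B : Set α) : Prop :=
  M.IsBase B ∧ ∀ B', M.IsBase B' → setWeight x B ≤ setWeight x B'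

/-- Deletion of a single element. -/
noncomputable def Matroid.del (M : Matroid α) (e : α) : Matroid α :=
  M ↾ (M.E \ {e})

/-- Contraction of a single element, defined by duality: `M/e = (M✶ \ e)✶`. -/
noncomputable def Matroid.con (M : Matroid α) (e : α) : Matroid α :=
  ((M✶ ↾ (M.E \ {e}))✶)

/-! ### Auxiliary lemmas -/

lemma Matroid.PaperIsCircuit.diff_indep {M : Matroid α} {C : Set α} (hC : M.PaperIsCircuit C) {f : α}
    (hf : f ∈ C) : M.Indep (C \ {f}) :=
  hC.2 (Set.sdiff_singleton_ssubset.mpr hf)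

lemma Matroid.PaperIsCircuit.mem_closure_diff {M : Matroid α} {C : Set α} (hC : M.PaperIsCircuit C) {f : α}
    (hf : f ∈ C) : f ∈ M.closure (C \ {f}) := by
  have hind := hC.diff_indep hf
  have hdep : M.Dep (insert f (C \ {f})) := by
    rw [insert_diff_singleton, insert_eq_of_mem hf]; exact hC.1
  exact (hind.insert_dep_iff.mp hdep).1

lemma exists_circuit_subset_aux (M : Matroid α) :
    ∀ n (X : Set α), X.Finite → X.ncard ≤ n → M.Dep X → ∃ C ⊆ X, M.PaperIsCircuit C := by
  intro n
  induction n with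
  | zero =>
    intro X hfin hcard hX
    rw [Nat.le_zero, Set.ncard_eq_zero hfin] at hcard
    subst hcard
    exact absurd M.empty_indep hX.not_indep
  | succ n ih =>
    intro X hfin hcard hX
    by_cases h : ∀ ⦃D⦄, D ⊂ X → M.Indep D
    · exact ⟨X, subset_rfl, hX, h⟩
    · push_neg at h
      obtain ⟨D, hDX, hD⟩ := h
      have hDdep : M.Dep D := (M.dep_iff).mpr ⟨hD, hDX.subset.trans hX.subset_ground⟩
      have hDfin : D.Finite := hfin.subset hDX.subset
      have : D.ncard ≤ n := by
        have := Set.ncard_lt_ncard hDX hfin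
        omega
      obtain ⟨C, hCD, hC⟩ := ih D hDfin this hDdep
      exact ⟨C, hCD.trans hDX.subset, hC⟩

lemma exists_circuit_subset (M : Matroid α) {X : Set α} (hfin : X.Finite) (hX : M.Dep X) :
    ∃ C ⊆ X, M.PaperIsCircuit C :=
  exists_circuit_subset_aux M X.ncard X hfin le_rfl hX

lemma setWeight_finite_eq (x : α → ℝ) {S : Set α} (hS : S.Finite) :
    setWeight x S = ∑ i ∈ hS.toFinset, x i := by
  rw [setWeight, ← finsum_mem_coe_finset, Set.Finite.coe_toFinset hS]

lemma setWeight_exchange (x : α → ℝ) {B : Set α} (hfin : B.Finite) {f g : α}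
    (hf : f ∈ B) (hg : g ∉ B) :
    setWeight x (insert g (B \ {f})) = setWeight x B - x f + x g := by
  classical
  have hfin' : (insert g (B \ {f})).Finite := hfin.diff.insert g
  rw [setWeight_finite_eq x hfin', setWeight_finite_eq x hfin]
  have hset : hfin'.toFinset = insert g (hfin.toFinset.erase f) := by
    ext a
    simp [Set.Finite.mem_toFinset, Finset.mem_insert, Finset.mem_erase, and_comm]
  rw [hset, Finset.sum_insert (by simp [Set.Finite.mem_toFinset, hg])]
  have := Finset.sum_erase_add hfin.toFinset x
    (show f ∈ hfin.toFinset by simpa [Set.Finite.mem_toFinset] using hf)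
  linarith

/-- If `B` is optimal, `f ∈ B`, `g ∉ B`, and the swap is a base, then `x f ≤ x g`. -/
lemma optimal_swap_le {M : Matroid α} [M.Finite] {x : α → ℝ} {B : Set α}
    (hB : IsOptimalBase M x B) {f g : α} (hf : f ∈ B) (hg : g ∉ B)
    (hbase : M.IsBase (insert g (B \ {f}))) : x f ≤ x g := by
  have hfin : B.Finite := M.set_finite B hB.1.subset_ground
  have hle := hB.2 _ hbase
  rw [setWeight_exchange x hfin hf hg] at hle
  linarith

/-- for an optimal basis `B` and `e ∉ B`, `x(e) ≥ μ_e(x)` and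
`μ_e(x)` is the maximum weight of an element of the fundamental path of `e`. -/
theorem stmt7 (M : Matroid α) [M.Finite] (hM : M.PaperLoopless)
    (x : α → ℝ) {B : Set α} (hB : IsOptimalBase M x B)
    {e : α} (he : e ∈ M.E) (heB : e ∉ B) :
    x e ≥ muWeight M x e ∧
      muWeight M x e = sSup (x '' {f ∈ B | M.IsBase (insert e (B \ {f}))}) := by
  obtain ⟨hBbase, hBopt⟩ := hB
  have hBE : B ⊆ M.E := hBbase.subset_ground
  have hBfin : B.Finite := M.set_finite B hBE
  have hdep : M.Dep (insert e B) := hBbase.insert_dep ⟨he, heB⟩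
  obtain ⟨C, hCsub, hC⟩ := exists_circuit_subset M (hBfin.insert e) hdep
  have heC : e ∈ C := by
    by_contra heC
    have : C ⊆ B := fun a ha => ((hCsub ha).resolve_left (fun h => heC (h ▸ ha)))
    exact hC.1.not_indep (hBbase.indep.subset this)
  -- every element of C \ {e} is in B
  have hCB : C \ {e} ⊆ B := fun a ha =>
    ((hCsub ha.1).resolve_left (fun h => ha.2 h))
  -- for f ∈ C \ {e}, e ∉ closure (B \ {f}) and the swap is a base
  have key : ∀ f ∈ C \ {e}, e ∉ M.closure (B \ {f}) ∧ M.IsBase (insert e (B \ {f})) := by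
    intro f hfCe
    have hfB : f ∈ B := hCB hfCe
    have hBf : M.Indep (B \ {f}) := hBbase.indep.subset diff_subset
    have heclo : e ∉ M.closure (B \ {f}) := by
      intro hecl
      have hf1 : f ∈ M.closure (C \ {f}) := hC.mem_closure_diff hfCe.1
      have hsub : C \ {f} ⊆ insert e (B \ {f}) := by
        rintro a ⟨haC, haf⟩
        rcases hCsub haC with rfl | haB
        · exact mem_insert _ _
        · exact Set.mem_insert_iff.mpr (Or.inr ⟨haB, haf⟩)
      have hf2 : f ∈ M.closure (insert e (B \ {f})) :=
        M.closure_subset_closure hsub hf1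
      rw [closure_insert_eq_of_mem_closure hecl] at hf2
      exact hBbase.indep.notMem_closure_diff_of_mem hfB hf2
    have hind : M.Indep (insert e (B \ {f})) :=
      (hBf.insert_indep_iff_of_notMem (fun h => heB h.1)).mpr ⟨he, heclo⟩
    exact ⟨heclo, hBbase.exchange_isBase_of_indep heB hind⟩
  -- the fundamental path equals C \ {e}
  have hPeq : {f ∈ B | M.IsBase (insert e (B \ {f}))} = C \ {e} := by
    ext f
    constructor
    · rintro ⟨hfB, hfbase⟩
      refine ⟨?_, fun h => heB (h ▸ hfB)⟩
      by_contra hfC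
      have : C ⊆ insert e (B \ {f}) := by
        intro a ha
        rcases hCsub ha with rfl | haB
        · exact mem_insert _ _
        · exact Set.mem_insert_iff.mpr (Or.inr ⟨haB, fun h => hfC (h ▸ ha)⟩)
      exact hC.1.not_indep (hfbase.indep.subset this)
    · intro hf
      exact ⟨hCB hf, (key f hf).2⟩
  -- C \ {e} is finite and nonempty
  have hCfin : C.Finite := M.set_finite C hC.1.subset_ground
  have hCe_ne : (C \ {e}).Nonempty := by
    rw [Set.nonempty_iff_ne_empty]
    intro h
    have : C = {e} := by
      apply Set.eq_singleton_iff_unique_mem.mpr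
      refine ⟨heC, fun a ha => by_contra fun hne => ?_⟩
      exact (Set.eq_empty_iff_forall_notMem.mp h a) ⟨ha, hne⟩
    exact hC.1.not_indep (this ▸ (hM e he).1)
  -- the max element f* of x '' (C \ {e})
  have hSfin : (x '' (C \ {e})).Finite := (hCfin.diff.image x)
  have hSne : (x '' (C \ {e})).Nonempty := hCe_ne.image x
  have hmem : sSup (x '' (C \ {e})) ∈ x '' (C \ {e}) := hSne.csSup_mem hSfin
  obtain ⟨f0, hf0, hxf0⟩ := hmem
  set m := sSup (x '' (C \ {e})) with hm
  -- m is a lower bound for the muWeight set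
  have hbound : ∀ w ∈ {w | ∃ C, M.PaperIsCircuit C ∧ e ∈ C ∧ w = sSup (x '' (C \ {e}))}, m ≤ w := by
    rintro w ⟨C', hC', heC', rfl⟩
    have hC'fin : C'.Finite := M.set_finite C' hC'.1.subset_ground
    have hS'fin : (x '' (C' \ {e})).Finite := hC'fin.diff.image x
    -- find g ∈ C' \ {e} not in closure (B \ {f0})
    have hnotsub : ¬ (C' \ {e} ⊆ M.closure (B \ {f0})) := by
      intro hsub
      have he1 : e ∈ M.closure (C' \ {e}) := hC'.mem_closure_diff heC'
      have : e ∈ M.closure (B \ {f0}) := by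
        have := M.closure_subset_closure hsub he1
        rwa [M.closure_closure] at this
      exact (key f0 hf0).1 this
    obtain ⟨g, hgC', hgclo⟩ := not_subset.mp hnotsub
    have hxg_le : x g ≤ sSup (x '' (C' \ {e})) :=
      le_csSup hS'fin.bddAbove ⟨g, hgC', rfl⟩
    have hf0g : x f0 ≤ x g := by
      by_cases hgf : g = f0
      · exact le_of_eq (by rw [hgf])
      have hgB : g ∉ B := by
        intro hgB
        exact hgclo (M.subset_closure _ (fun a ha => hBE ha.1) ⟨hgB, hgf⟩)
      have hgE : g ∈ M.E := hC'.1.subset_ground hgC'.1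
      have hind : M.Indep (insert g (B \ {f0})) :=
        ((hBbase.indep.subset diff_subset).insert_indep_iff_of_notMem
          (fun h => hgB h.1)).mpr ⟨hgE, hgclo⟩
      have hbase : M.IsBase (insert g (B \ {f0})) :=
        hBbase.exchange_isBase_of_indep hgB hind
      exact optimal_swap_le ⟨hBbase, hBopt⟩ (hCB hf0) hgB hbase
    calc m = x f0 := hxf0.symm
      _ ≤ x g := hf0g
      _ ≤ _ := hxg_le
  -- muWeight equals m
  have hmu : muWeight M x e = m := by
    rw [muWeight]
    apply le_antisymm
    · exact csInf_le ⟨m, hbound⟩ ⟨C, hC, heC, rfl⟩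
    · exact le_csInf ⟨m, C, hC, heC, rfl⟩ hbound
  refine ⟨?_, by rw [hmu, hPeq]⟩
  rw [hmu, ← hxf0, ge_iff_le]
  exact optimal_swap_le ⟨hBbase, hBopt⟩ (hCB hf0) heB (key f0 hf0).2
end

section
/- Tropical Kirchhoff formula, contraction part: For a loopless matroid M, element e, and weighting x : E → ℝ, the minimum weight of a basis of the contraction M/e equals mwb(M,x) - min{x(e), μ_e(x)}, where mwb(M,x) is the minimum weight of a basis of M. -/
open Matroid Set

variable {α : Type*}

section Aux

variable {M : Matroid α} {x : α → ℝ} {e f : α} {B C D : Set α}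

lemma Matroid.PaperIsCircuit.diff_indep_s9 (hC : M.PaperIsCircuit C) (he : e ∈ C) : M.Indep (C \ {e}) :=
  hC.2 (Set.sdiff_singleton_ssubset.mpr he)

lemma Matroid.PaperIsCircuit.mem_closure (hC : M.PaperIsCircuit C) (he : e ∈ C) :
    e ∈ M.closure (C \ {e}) := by
  have hI := hC.diff_indep_s9 he
  have hd : M.Dep (insert e (C \ {e})) := by
    rw [insert_diff_singleton, insert_eq_of_mem he]
    exact hC.1
  exact (hI.insert_dep_iff.mp hd).1

lemma exists_circuit_subset_s9 [M.Finite] (hD : M.Dep D) :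
    ∃ C, C ⊆ D ∧ M.PaperIsCircuit C := by
  have hfin : {C | C ⊆ D ∧ M.Dep C}.Finite :=
    ((M.set_finite D hD.subset_ground).finite_subsets).subset (fun C hC => hC.1)
  obtain ⟨C, ⟨hCD, hC⟩, hmin⟩ : ∃ C ∈ {C | C ⊆ D ∧ M.Dep C},
      ∀ C' ∈ {C | C ⊆ D ∧ M.Dep C}, C' ⊆ C → C = C' := by
    obtain ⟨C, hCm⟩ := hfin.isPWO.exists_minimal ⟨D, Subset.rfl, hD⟩
    exact ⟨C, hCm.1, fun C' hC' hle => hCm.eq_of_ge hC' hle⟩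
  refine ⟨C, hCD, hC, fun D' hD' => ?_⟩
  by_contra hind
  have hD'E : D' ⊆ M.E := hD'.subset.trans hC.subset_ground
  have : C = D' := hmin D' ⟨hD'.subset.trans hCD, ⟨hind, hD'E⟩⟩ hD'.subset
  exact hD'.ne this.symm

/-- There is a circuit through `e` inside `insert e B` when `B` is a base avoiding `e`. -/
lemma exists_fund_circuit [M.Finite] (hB : M.IsBase B) (heB : e ∉ B) (he : e ∈ M.E) :
    ∃ C, M.PaperIsCircuit C ∧ e ∈ C ∧ C ⊆ insert e B ∧
      ∀ f ∈ C \ {e}, M.IsBase (insert e (B \ {f})) := by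
  obtain ⟨C, hCB, hC⟩ := exists_circuit_subset_s9 (hB.insert_dep ⟨he, heB⟩)
  have heC : e ∈ C := by
    by_contra heC
    exact hC.1.not_indep (hB.indep.subset (fun a ha =>
      ((hCB ha).resolve_left (fun h => heC (h ▸ ha)))))
  refine ⟨C, hC, heC, hCB, fun f hf => ?_⟩
  have hfB : f ∈ B := ((hCB hf.1).resolve_left hf.2)
  have hBf : M.Indep (B \ {f}) := hB.indep.subset diff_subset
  have hind : M.Indep (insert e (B \ {f})) := by
    by_contra hind
    have hdep : M.Dep (insert e (B \ {f})) :=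
      ⟨hind, insert_subset he ((diff_subset).trans hB.subset_ground)⟩
    have hecl : e ∈ M.closure (B \ {f}) := (hBf.insert_dep_iff.mp hdep).1
    have hsub : C \ {f} ⊆ M.closure (B \ {f}) := by
      intro a ha
      rcases hCB ha.1 with rfl | haB
      · exact hecl
      · exact M.subset_closure (B \ {f}) (diff_subset.trans hB.subset_ground) ⟨haB, ha.2⟩
    have : f ∈ M.closure (B \ {f}) :=
      (M.closure_subset_closure_of_subset_closure hsub) (hC.mem_closure hf.1)
    exact hB.indep.notMem_closure_diff_of_mem hfB this
  exact hB.exchange_isBase_of_indep heB hind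

/-- Exchange out: a base containing `e` and a circuit through `e` give an exchange. -/
lemma exists_exchange_out (hB : M.IsBase B) (heB : e ∈ B) (hC : M.PaperIsCircuit C)
    (heC : e ∈ C) : ∃ f ∈ C \ {e}, f ∉ B ∧ M.IsBase (insert f (B \ {e})) := by
  by_contra h
  push_neg at h
  have hBe : M.Indep (B \ {e}) := hB.indep.subset diff_subset
  have hsub : C \ {e} ⊆ M.closure (B \ {e}) := by
    intro f hf
    by_cases hfB : f ∈ B
    · exact M.subset_closure (B \ {e}) (diff_subset.trans hB.subset_ground) ⟨hfB, hf.2⟩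
    · have hnb := h f hf hfB
      have hind : ¬ M.Indep (insert f (B \ {e})) := fun hi =>
        hnb (hB.exchange_isBase_of_indep hfB hi)
      have hdep : M.Dep (insert f (B \ {e})) :=
        ⟨hind, insert_subset (hC.1.subset_ground hf.1)
          (diff_subset.trans hB.subset_ground)⟩
      exact (hBe.insert_dep_iff.mp hdep).1
  have : e ∈ M.closure (B \ {e}) :=
    (M.closure_subset_closure_of_subset_closure hsub) (hC.mem_closure heC)
  exact hB.indep.notMem_closure_diff_of_mem heB this

lemma setWeight_insert (hfin : B.Finite) (h : e ∉ B) :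
    setWeight x (insert e B) = x e + setWeight x B :=
  finsum_mem_insert x h hfin

lemma setWeight_diff (hfin : B.Finite) (hf : f ∈ B) :
    setWeight x B = x f + setWeight x (B \ {f}) := by
  have h1 : insert f (B \ {f}) = B := by
    rw [insert_diff_singleton, insert_eq_of_mem hf]
  calc setWeight x B = setWeight x (insert f (B \ {f})) := by rw [h1]
    _ = x f + setWeight x (B \ {f}) :=
      setWeight_insert (hfin.diff) (fun h => h.2 rfl)

lemma mwbSet_finite (M : Matroid α) [M.Finite] (x : α → ℝ) :
    {w | ∃ B, M.IsBase B ∧ w = setWeight x B}.Finite := by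
  have h1 : {B | M.IsBase B}.Finite :=
    (M.ground_finite.finite_subsets).subset (fun B hB => hB.subset_ground)
  have h2 : {w | ∃ B, M.IsBase B ∧ w = setWeight x B} = setWeight x '' {B | M.IsBase B} := by
    ext w
    simp only [mem_image, mem_setOf_eq]
    exact ⟨fun ⟨B, h, hw⟩ => ⟨B, h, hw.symm⟩, fun ⟨B, h, hw⟩ => ⟨B, h, hw.symm⟩⟩
  rw [h2]
  exact h1.image _

lemma mwb_le (M : Matroid α) [M.Finite] (x : α → ℝ) (hB : M.IsBase B) :
    mwb M x ≤ setWeight x B :=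
  csInf_le (mwbSet_finite M x).bddBelow ⟨B, hB, rfl⟩

lemma exists_min_base (M : Matroid α) [M.Finite] (x : α → ℝ) :
    ∃ B, M.IsBase B ∧ setWeight x B = mwb M x := by
  obtain ⟨B0, hB0⟩ := M.exists_isBase
  have hne : {w | ∃ B, M.IsBase B ∧ w = setWeight x B}.Nonempty := ⟨_, B0, hB0, rfl⟩
  obtain ⟨B, hB, hw⟩ := hne.csInf_mem (mwbSet_finite M x)
  exact ⟨B, hB, hw.symm⟩

lemma muSet_finite (M : Matroid α) [M.Finite] (x : α → ℝ) (e : α) :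
    {w | ∃ C, M.PaperIsCircuit C ∧ e ∈ C ∧ w = sSup (x '' (C \ {e}))}.Finite := by
  have h1 : {C | M.PaperIsCircuit C ∧ e ∈ C}.Finite :=
    (M.ground_finite.finite_subsets).subset (fun C hC => hC.1.1.subset_ground)
  have h2 : {w | ∃ C, M.PaperIsCircuit C ∧ e ∈ C ∧ w = sSup (x '' (C \ {e}))} =
      (fun C => sSup (x '' (C \ {e}))) '' {C | M.PaperIsCircuit C ∧ e ∈ C} := by
    ext w
    simp only [mem_image, mem_setOf_eq]
    exact ⟨fun ⟨C, h, hw, he⟩ => ⟨C, ⟨h, hw⟩, he.symm⟩,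
      fun ⟨C, ⟨h, hw⟩, he⟩ => ⟨C, h, hw, he.symm⟩⟩
  rw [h2]
  exact h1.image _

/-- In a loopless matroid, a circuit through `e` has a maximum-weight element off `e`,
whose weight equals the `sSup`. -/
lemma exists_max_elt [M.Finite] (hM : M.PaperLoopless) (hC : M.PaperIsCircuit C) (heC : e ∈ C) :
    ∃ f ∈ C \ {e}, x f = sSup (x '' (C \ {e})) ∧
      ∀ g ∈ C \ {e}, x g ≤ x f := by
  have hCE : C ⊆ M.E := hC.1.subset_ground
  have hfinC : C.Finite := M.set_finite C hCE
  have hne : (C \ {e}).Nonempty := by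
    rw [nonempty_iff_ne_empty]
    intro h
    have hCe : C = {e} := by
      apply (subset_singleton_iff_eq.mp (diff_eq_empty.mp h)).resolve_left
      intro h0
      exact hC.1.not_indep (h0 ▸ M.empty_indep)
    exact hC.1.not_indep (hCe ▸ (hM e (hCE heC)).1)
  have hfin : (x '' (C \ {e})).Finite := ((hfinC.diff).image x)
  obtain ⟨f, hf, hxf⟩ := (hne.image x).csSup_mem hfin
  refine ⟨f, hf, hxf, fun g hg => ?_⟩
  rw [hxf]
  exact le_csSup hfin.bddAbove ⟨g, hg, rfl⟩

lemma con_base_iff (he : e ∈ M.E) (hje : M.Indep {e}) :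
    (M.con e).IsBase B ↔ M.IsBase (insert e B) ∧ e ∉ B := by
  show ((M✶ ↾ (M.E \ {e}))✶).IsBase B ↔ _
  have hXd : M.E \ {e} ⊆ M✶.E := by rw [dual_ground]; exact diff_subset
  constructor
  · intro h
    have hBX : B ⊆ M.E \ {e} := h.subset_ground
    have h2 : (M✶ ↾ (M.E \ {e})).IsBase ((M.E \ {e}) \ B) :=
      (dual_isBase_iff (M := M✶ ↾ (M.E \ {e})) (B := B) hBX).mp h
    have h3 : M✶.IsBasis ((M.E \ {e}) \ B) (M.E \ {e}) := (isBase_restrict_iff hXd).mp h2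
    obtain ⟨B0, hB0, heB0⟩ := hje.exists_isBase_superset
    have heB0' : e ∈ B0 := heB0 rfl
    have hcl0 : M✶.closure (M.E \ B0) = M✶.E := hB0.compl_isBase_dual.closure_eq
    have hsub0 : M.E \ B0 ⊆ M.E \ {e} :=
      diff_subset_diff_right (singleton_subset_iff.mpr heB0')
    have hecl : e ∈ M✶.closure (M.E \ {e}) := by
      refine M✶.closure_subset_closure hsub0 ?_
      rw [hcl0]; exact he
    have hclD : M✶.closure ((M.E \ {e}) \ B) = M✶.closure (M.E \ {e}) :=
      h3.closure_eq_closure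
    have hspan : M✶.E ⊆ M✶.closure ((M.E \ {e}) \ B) := by
      rw [hclD]
      intro a ha
      by_cases hae : a = e
      · exact hae ▸ hecl
      · exact M✶.subset_closure (M.E \ {e}) hXd ⟨ha, hae⟩
    have hbase : M✶.IsBase ((M.E \ {e}) \ B) := h3.indep.isBase_of_ground_subset_closure hspan
    have hcompl : M.IsBase (M.E \ ((M.E \ {e}) \ B)) := hbase.compl_isBase_of_dual
    have heq : M.E \ ((M.E \ {e}) \ B) = insert e B := by
      ext a
      simp only [mem_diff, mem_singleton_iff, mem_insert_iff]
      constructor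
      · rintro ⟨haE, h'⟩
        by_cases hae : a = e
        · exact Or.inl hae
        · right; by_contra haB; exact h' ⟨⟨haE, hae⟩, haB⟩
      · rintro (rfl | haB)
        · exact ⟨he, fun h => h.1.2 rfl⟩
        · exact ⟨(hBX haB).1, fun h => h.2 haB⟩
    exact ⟨heq ▸ hcompl, fun h => (hBX h).2 rfl⟩
  · rintro ⟨hBase, heB⟩
    have hBX : B ⊆ M.E \ {e} := fun a ha =>
      ⟨hBase.subset_ground (Or.inr ha), fun h => heB (mem_singleton_iff.mp h ▸ ha)⟩
    have hD : M✶.IsBase (M.E \ insert e B) := hBase.compl_isBase_dual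
    have heq : M.E \ insert e B = (M.E \ {e}) \ B := by
      ext a; simp only [mem_diff, mem_insert_iff, mem_singleton_iff]; tauto
    rw [heq] at hD
    have h3 : M✶.IsBasis ((M.E \ {e}) \ B) (M.E \ {e}) :=
      hD.isBasis_of_subset hXd diff_subset
    have h2 : (M✶ ↾ (M.E \ {e})).IsBase ((M.E \ {e}) \ B) := (isBase_restrict_iff hXd).mpr h3
    exact (dual_isBase_iff (M := M✶ ↾ (M.E \ {e})) (B := B) hBX).mpr h2

end Aux

/-- tropical Kirchhoff formula, contraction part. -/
theorem stmt9 (M : Matroid α) [M.Finite] (hM : M.PaperLoopless)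
    (x : α → ℝ) {e : α} (he : e ∈ M.E) :
    mwb (M.con e) x = mwb M x - min (x e) (muWeight M x e) := by
  obtain ⟨hIe, hcoloop⟩ := hM e he
  set μ := muWeight M x e with hμdef
  have hμfin := muSet_finite M x e
  obtain ⟨B0, hB0, heB0⟩ := hcoloop
  obtain ⟨C0, hC0, heC0, -, -⟩ := exists_fund_circuit hB0 heB0 he
  have hμne : {w | ∃ C, M.PaperIsCircuit C ∧ e ∈ C ∧ w = sSup (x '' (C \ {e}))}.Nonempty :=
    ⟨_, C0, hC0, heC0, rfl⟩
  obtain ⟨Cμ, hCμ, heCμ, hw0⟩ := hμne.csInf_mem hμfin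
  have hμle : ∀ C, M.PaperIsCircuit C → e ∈ C → μ ≤ sSup (x '' (C \ {e})) :=
    fun C hC heC => csInf_le hμfin.bddBelow ⟨C, hC, heC, rfl⟩
  -- lower bound for every base containing e
  have hLB : ∀ B, M.IsBase B → e ∈ B → mwb M x + x e - min (x e) μ ≤ setWeight x B := by
    intro B hB heB
    rcases le_total (x e) μ with hle | hle
    · rw [min_eq_left hle]
      have := mwb_le M x hB
      linarith
    · rw [min_eq_right hle]
      obtain ⟨f, hf, hfB, hBf⟩ := exists_exchange_out hB heB hCμ heCμ
      have h1 : mwb M x ≤ setWeight x (insert f (B \ {e})) := mwb_le M x hBf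
      have hBfin : B.Finite := M.set_finite B hB.subset_ground
      have h2 : setWeight x (insert f (B \ {e})) = x f + setWeight x (B \ {e}) :=
        setWeight_insert (hBfin.diff) (fun h => hfB h.1)
      have h3 : setWeight x B = x e + setWeight x (B \ {e}) := setWeight_diff hBfin heB
      have hfμ : x f ≤ μ := by
        rw [hμdef, muWeight, hw0]
        exact le_csSup (((M.set_finite Cμ hCμ.1.subset_ground).diff).image x).bddAbove
          ⟨f, hf, rfl⟩
      linarith
  -- upper bound witness: some base containing e of small weight
  have hUB : ∃ B, M.IsBase B ∧ e ∈ B ∧ setWeight x B ≤ mwb M x + x e - min (x e) μ := by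
    obtain ⟨Bs, hBs, hwBs⟩ := exists_min_base M x
    by_cases heB : e ∈ Bs
    · refine ⟨Bs, hBs, heB, ?_⟩
      have := min_le_left (x e) μ
      linarith
    · obtain ⟨C, hC, heC, hCsub, hexch⟩ := exists_fund_circuit hBs heB he
      obtain ⟨f, hf, hxf, -⟩ := exists_max_elt (x := x) hM hC heC
      refine ⟨insert e (Bs \ {f}), hexch f hf, mem_insert _ _, ?_⟩
      have hBfin : Bs.Finite := M.set_finite Bs hBs.subset_ground
      have hfB : f ∈ Bs := (hCsub hf.1).resolve_left hf.2
      have h2 : setWeight x (insert e (Bs \ {f})) = x e + setWeight x (Bs \ {f}) :=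
        setWeight_insert (hBfin.diff) (fun h => heB h.1)
      have h3 : setWeight x Bs = x f + setWeight x (Bs \ {f}) := setWeight_diff hBfin hfB
      have hμxf : μ ≤ x f := by rw [hxf]; exact hμle C hC heC
      have hmin : min (x e) μ ≤ x f := le_trans (min_le_right _ _) hμxf
      linarith
  -- assemble
  have hSlb : ∀ w ∈ {w | ∃ B, (M.con e).IsBase B ∧ w = setWeight x B},
      mwb M x - min (x e) μ ≤ w := by
    rintro w ⟨B, hB, rfl⟩
    obtain ⟨hBase, heB⟩ := (con_base_iff he hIe).mp hB
    have hfin : B.Finite := M.set_finite B (fun a ha => hBase.subset_ground (Or.inr ha))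
    have h1 : setWeight x (insert e B) = x e + setWeight x B := setWeight_insert hfin heB
    have h2 := hLB _ hBase (mem_insert _ _)
    linarith
  have hSub : ∃ w ∈ {w | ∃ B, (M.con e).IsBase B ∧ w = setWeight x B},
      w ≤ mwb M x - min (x e) μ := by
    obtain ⟨B, hB, heB, hle⟩ := hUB
    refine ⟨setWeight x (B \ {e}),
      ⟨B \ {e}, (con_base_iff he hIe).mpr ⟨?_, fun h => h.2 rfl⟩, rfl⟩, ?_⟩
    · rwa [insert_diff_singleton, insert_eq_of_mem heB]
    · have hfin : B.Finite := M.set_finite B hB.subset_ground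
      have h3 : setWeight x B = x e + setWeight x (B \ {e}) := setWeight_diff hfin heB
      linarith
  obtain ⟨w, hwS, hwle⟩ := hSub
  have hbdd : BddBelow {w | ∃ B, (M.con e).IsBase B ∧ w = setWeight x B} :=
    ⟨mwb M x - min (x e) μ, fun w hw => hSlb w hw⟩
  refine le_antisymm (le_trans (csInf_le hbdd hwS) hwle) (le_csInf ⟨w, hwS⟩ hSlb)
end
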